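/- (Theorem 3.1, part 2.) Let b ≥ 0 and let m1, m0 : ℝ → ℝ satisfy the smoothness assumption with constant b on [0,1]. Let 0 ≤ p0l ≤ p' ≤ p ≤ p1u ≤ 1, let Δpl, Δpu be constants with 0 < Δpl ≤ p − p' ≤ Δpu, let v* ∈ [0,1], and set ΔY := ∫_{p'}^{p} (m1(v) − m0(v)) dv and I(v*) := ∫_{p0l}^{p1u} 2b·|v − v*| dv. If ΔY + I(v*) ≤ 0, then (ΔY − I(v*))/Δpl ≤ m1(v*) − m0(v*) ≤ (ΔY + I(v*))/Δpu. -/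

import Mathlib

open MeasureTheory


/-- Theorem 3.1, part 2: If `ΔY + I(v*) ≤ 0`, then
`(ΔY - I(v*))/Δpl ≤ MTE(v*) ≤ (ΔY + I(v*))/Δpu`. -/
theorem mte_bounds_misreporting_nonpos_case
    (b : ℝ) (hb : 0 ≤ b) (m1 m0 : ℝ → ℝ)
    (hm1 : ∀ v1 ∈ Set.Icc (0:ℝ) 1, ∀ v2 ∈ Set.Icc (0:ℝ) 1, |m1 v1 - m1 v2| ≤ b * |v1 - v2|)
    (hm0 : ∀ v1 ∈ Set.Icc (0:ℝ) 1, ∀ v2 ∈ Set.Icc (0:ℝ) 1, |m0 v1 - m0 v2| ≤ b * |v1 - v2|)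
    (p0l p' p p1u : ℝ) (h0 : 0 ≤ p0l) (h1 : p0l ≤ p') (h2 : p' ≤ p) (h3 : p ≤ p1u)
    (h4 : p1u ≤ 1)
    (Δpl Δpu : ℝ) (hΔpl0 : 0 < Δpl) (hΔpl : Δpl ≤ p - p') (hΔpu : p - p' ≤ Δpu)
    (vstar : ℝ) (hv : vstar ∈ Set.Icc (0:ℝ) 1)
    (ΔY I : ℝ) (hΔY : ΔY = ∫ v in p'..p, (m1 v - m0 v))
    (hI : I = ∫ v in p0l..p1u, 2 * b * |v - vstar|)
    (hsign : ΔY + I ≤ 0) :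
    (ΔY - I) / Δpl ≤ m1 vstar - m0 vstar ∧
      m1 vstar - m0 vstar ≤ (ΔY + I) / Δpu := by
  set M := m1 vstar - m0 vstar with hM
  set f : ℝ → ℝ := fun v => m1 v - m0 v with hf
  have hsub : Set.uIcc p' p ⊆ Set.Icc (0:ℝ) 1 := by
    rw [Set.uIcc_of_le h2]
    exact Set.Icc_subset_Icc (le_trans h0 h1) (le_trans h3 h4)
  have hsub2 : Set.uIcc p0l p1u ⊆ Set.Icc (0:ℝ) 1 := by
    rw [Set.uIcc_of_le (le_trans h1 (le_trans h2 h3))]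
    exact Set.Icc_subset_Icc h0 h4
  -- key pointwise bound
  have hkey : ∀ v ∈ Set.Icc (0:ℝ) 1, |f v - M| ≤ 2 * b * |v - vstar| := by
    intro v hvm
    have h1' := hm1 v hvm vstar hv
    have h0' := hm0 v hvm vstar hv
    have : f v - M = (m1 v - m1 vstar) - (m0 v - m0 vstar) := by ring
    rw [this]
    calc |(m1 v - m1 vstar) - (m0 v - m0 vstar)| ≤ |m1 v - m1 vstar| + |m0 v - m0 vstar| :=
          abs_sub _ _
      _ ≤ b * |v - vstar| + b * |v - vstar| := add_le_add h1' h0'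
      _ = 2 * b * |v - vstar| := by ring
  -- continuity / integrability
  have hcont1 : ContinuousOn m1 (Set.Icc (0:ℝ) 1) := by
    apply (LipschitzOnWith.continuousOn (K := ⟨b, hb⟩))
    apply LipschitzOnWith.of_dist_le_mul
    intro x hx y hy
    rw [Real.dist_eq, Real.dist_eq]; exact hm1 x hx y hy
  have hcont0 : ContinuousOn m0 (Set.Icc (0:ℝ) 1) := by
    apply (LipschitzOnWith.continuousOn (K := ⟨b, hb⟩))
    apply LipschitzOnWith.of_dist_le_mul
    intro x hx y hy
    rw [Real.dist_eq, Real.dist_eq]; exact hm0 x hx y hy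
  have hcontf : ContinuousOn f (Set.Icc (0:ℝ) 1) := hcont1.sub hcont0
  have hintf : IntervalIntegrable f volume p' p :=
    (hcontf.mono hsub).intervalIntegrable
  have hcontg : Continuous (fun v => 2 * b * |v - vstar|) := by continuity
  have hintg : IntervalIntegrable (fun v => 2 * b * |v - vstar|) volume p' p :=
    hcontg.intervalIntegrable _ _
  have hintg2 : IntervalIntegrable (fun v => 2 * b * |v - vstar|) volume p0l p1u :=
    hcontg.intervalIntegrable _ _
  have hgnonneg : ∀ v : ℝ, 0 ≤ 2 * b * |v - vstar| := fun v => by positivity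
  -- ΔY - (p - p') * M = ∫ (f v - M)
  have hsplit : ΔY - (p - p') * M = ∫ v in p'..p, (f v - M) := by
    rw [intervalIntegral.integral_sub hintf (intervalIntegrable_const), hΔY,
      intervalIntegral.integral_const]
    simp [f, mul_comm]
  -- bound: |∫ (f v - M)| ≤ ∫_{p'}^{p} 2b|v-v*|
  have hbound1 : |∫ v in p'..p, (f v - M)| ≤ ∫ v in p'..p, 2 * b * |v - vstar| := by
    have h := intervalIntegral.norm_integral_le_integral_norm (f := fun v => f v - M)
      (a := p') (b := p) (μ := volume) h2
    refine h.trans ?_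
    apply intervalIntegral.integral_mono_on h2 _ hintg
    · intro v hvv
      exact hkey v (hsub (by rw [Set.uIcc_of_le h2]; exact hvv))
    · exact (hintf.sub intervalIntegrable_const).norm
  -- enlarge interval
  have hbound2 : (∫ v in p'..p, 2 * b * |v - vstar|) ≤ I := by
    rw [hI]
    apply intervalIntegral.integral_mono_interval h1 h2 h3 _ hintg2
    filter_upwards with v using hgnonneg v
  have hInn : 0 ≤ I := by
    rw [hI]
    apply intervalIntegral.integral_nonneg (le_trans h1 (le_trans h2 h3))
    intro v _; exact hgnonneg v
  have habs : |ΔY - (p - p') * M| ≤ I := by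
    rw [hsplit]
    exact hbound1.trans hbound2
  have hlow : ΔY - I ≤ (p - p') * M := by
    have := abs_le.mp habs
    linarith [this.1]
  have hhigh : (p - p') * M ≤ ΔY + I := by
    have := abs_le.mp habs
    linarith [this.2]
  have hpp : 0 < p - p' := lt_of_lt_of_le hΔpl0 hΔpl
  have hMnp : M ≤ 0 := by nlinarith
  have hΔpu0 : 0 < Δpu := lt_of_lt_of_le hΔpl0 (hΔpl.trans hΔpu)
  constructor
  · rw [div_le_iff₀ hΔpl0]
    nlinarith
  · rw [le_div_iff₀ hΔpu0]
    nlinarith
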